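/- Suppose a one-turn path scheme in ℕ² admits, from configuration (u₁, c), valid nonnegative paths determined by loop-iteration vectors w + k₁·p and w + k₂·p (k₁ < k₂, w, p ∈ ℕ²). Then for every k with k₁ ≤ k ≤ k₂, the path determined by w + k·p starting at (u₁, c) is also valid (stays nonnegative throughout). -/

import Mathlib

/-- A sequence of steps `l` stays nonnegative when started at `u`. -/
def stays (u : Fin 2 → ℤ) (l : List (Fin 2 → ℤ)) : Prop :=
  ∀ j ≤ l.length, ∀ i, 0 ≤ u i + (l.take j).sum i

lemma stays_append (u : Fin 2 → ℤ) (X Y : List (Fin 2 → ℤ)) :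
    stays u (X ++ Y) ↔ stays u X ∧ stays (u + X.sum) Y := by
  constructor
  · intro h
    refine ⟨fun j hj i => ?_, fun j hj i => ?_⟩
    · have := h j (by simp; omega) i
      rwa [List.take_append_of_le_length hj] at this
    · have := h (X.length + j) (by simp; omega) i
      rw [List.take_append, List.sum_append] at this
      simpa [add_assoc, List.take_of_length_le (by omega : X.length ≤ X.length + j)] using this
  · rintro ⟨h1, h2⟩ j hj i
    rcases le_or_gt j X.length with h | h
    · rw [List.take_append_of_le_length h]; exact h1 j h i
    · have hj' : j = X.length + (j - X.length) := by omega
      rw [hj', List.take_append, List.sum_append]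
      have := h2 (j - X.length) (by simp at hj; omega) i
      simpa [add_assoc, List.take_of_length_le (by omega : X.length ≤ X.length + (j - X.length))] using this

lemma stays_replicate (v : Fin 2 → ℤ) (n : ℕ) (β : Fin 2 → ℤ) :
    stays v (List.replicate n β) ↔ ∀ m ≤ n, ∀ i, 0 ≤ v i + (m : ℤ) * β i := by
  constructor
  · intro h m hm i
    have := h m (by simpa using hm) i
    rw [List.take_replicate, min_eq_left hm, List.sum_replicate] at this
    simpa [nsmul_eq_mul] using this
  · intro h j hj i
    rw [List.length_replicate] at hj
    rw [List.take_replicate, min_eq_left hj, List.sum_replicate]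
    simpa [nsmul_eq_mul] using h j hj i

/-- for a one-turn path scheme, if the paths determined by w + k₁·p and w + k₂·p
are valid from (u₁, c), so is the path determined by w + k·p for each k₁ ≤ k ≤ k₂. -/
theorem stmt8 (α₁ α₂ : List (Fin 2 → ℤ)) (β₁ β₂ : Fin 2 → ℤ)
    (hβ₁ : 0 < β₁ 0 ∧ β₁ 1 < 0) (hβ₂ : β₂ 0 < 0 ∧ 0 < β₂ 1)
    (u₁ c : ℤ) (w p : ℕ × ℕ) (k₁ k₂ : ℕ) (hk : k₁ < k₂)
    (path : ℕ × ℕ → List (Fin 2 → ℤ))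
    (hpath : ∀ nn, path nn = α₁ ++ List.replicate nn.1 β₁ ++ α₂ ++ List.replicate nn.2 β₂)
    (h1 : stays ![u₁, c] (path (w.1 + k₁ * p.1, w.2 + k₁ * p.2)))
    (h2 : stays ![u₁, c] (path (w.1 + k₂ * p.1, w.2 + k₂ * p.2))) :
    ∀ k, k₁ ≤ k → k ≤ k₂ → stays ![u₁, c] (path (w.1 + k * p.1, w.2 + k * p.2)) := by
  intro k hkl hkr
  simp only [hpath, stays_append, stays_replicate, List.sum_append, List.sum_replicate,
    Pi.add_apply, Pi.smul_apply, Pi.mul_apply, Pi.natCast_apply, nsmul_eq_mul] at h1 h2 ⊢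
  obtain ⟨⟨⟨h1a, h1b⟩, h1c⟩, h1d⟩ := h1
  obtain ⟨⟨⟨h2a, h2b⟩, h2c⟩, h2d⟩ := h2
  -- monotonicity facts
  have m1l : w.1 + k₁ * p.1 ≤ w.1 + k * p.1 := by
    have := Nat.mul_le_mul_right p.1 hkl; omega
  have m1r : w.1 + k * p.1 ≤ w.1 + k₂ * p.1 := by
    have := Nat.mul_le_mul_right p.1 hkr; omega
  have m2l : w.2 + k₁ * p.2 ≤ w.2 + k * p.2 := by
    have := Nat.mul_le_mul_right p.2 hkl; omega
  have m2r : w.2 + k * p.2 ≤ w.2 + k₂ * p.2 := by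
    have := Nat.mul_le_mul_right p.2 hkr; omega
  have ckl : (k₁ : ℤ) ≤ (k : ℤ) := by exact_mod_cast hkl
  have ckr : (k : ℤ) ≤ (k₂ : ℤ) := by exact_mod_cast hkr
  have cm1l : ((w.1 + k₁ * p.1 : ℕ) : ℤ) ≤ ((w.1 + k * p.1 : ℕ) : ℤ) := by exact_mod_cast m1l
  have cm1r : ((w.1 + k * p.1 : ℕ) : ℤ) ≤ ((w.1 + k₂ * p.1 : ℕ) : ℤ) := by exact_mod_cast m1r
  push_cast at cm1l cm1r
  refine ⟨⟨⟨h1a, ?_⟩, ?_⟩, ?_⟩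
  · -- β₁ block: follows from the k₂ path since n₁(k) ≤ n₁(k₂)
    intro m hm i
    exact h2b m (le_trans hm m1r) i
  · -- α₂ block
    intro j hj i
    fin_cases i
    · have h := h1c j hj 0
      simp only [Pi.add_apply, Pi.mul_apply, Pi.natCast_apply] at h ⊢
      push_cast at h ⊢
      have key : 0 ≤ (((w.1:ℤ) + k * p.1) - ((w.1:ℤ) + k₁ * p.1)) * β₁ 0 :=
        mul_nonneg (by linarith) hβ₁.1.le
      linarith [key]
    · have h := h2c j hj 1
      simp only [Pi.add_apply, Pi.mul_apply, Pi.natCast_apply] at h ⊢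
      push_cast at h ⊢
      have key : (((w.1:ℤ) + k₂ * p.1) - ((w.1:ℤ) + k * p.1)) * β₁ 1 ≤ 0 :=
        mul_nonpos_of_nonneg_of_nonpos (by linarith) hβ₁.2.le
      linarith [key]
  · -- β₂ block
    intro m hm i
    fin_cases i
    · -- coordinate 0: go to the worst point m = n₂(k), then linearity in k
      have hmle : (m : ℤ) ≤ (w.2:ℤ) + k * p.2 := by exact_mod_cast hm
      have hmc : ((w.2:ℤ) + k * p.2) * β₂ 0 ≤ (m : ℤ) * β₂ 0 := by
        exact mul_le_mul_of_nonpos_right hmle hβ₂.1.le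
      rcases le_or_gt 0 ((p.1 : ℤ) * β₁ 0 + (p.2 : ℤ) * β₂ 0) with hd | hd
      · have h := h1d (w.2 + k₁ * p.2) le_rfl 0
        simp only [Pi.mul_apply, Pi.add_apply, Pi.natCast_apply] at h ⊢
        push_cast at h ⊢
        have key : 0 ≤ ((k:ℤ) - k₁) * ((p.1 : ℤ) * β₁ 0 + (p.2 : ℤ) * β₂ 0) :=
          mul_nonneg (by linarith) hd
        linarith [key]
      · have h := h2d (w.2 + k₂ * p.2) le_rfl 0
        simp only [Pi.mul_apply, Pi.add_apply, Pi.natCast_apply] at h ⊢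
        push_cast at h ⊢
        have key : 0 ≤ ((k₂:ℤ) - k) * (-((p.1 : ℤ) * β₁ 0 + (p.2 : ℤ) * β₂ 0)) :=
          mul_nonneg (by linarith) (by linarith)
        linarith [key]
    · -- coordinate 1: compare with the k₂ path at the same m
      have h := h2d m (le_trans hm m2r) 1
      simp only [Pi.mul_apply, Pi.add_apply, Pi.natCast_apply] at h ⊢
      push_cast at h ⊢
      have key : (((w.1:ℤ) + k₂ * p.1) - ((w.1:ℤ) + k * p.1)) * β₁ 1 ≤ 0 :=
        mul_nonpos_of_nonneg_of_nonpos (by linarith) hβ₁.2.le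
      linarith [key]
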